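/- arXiv:1701.00889 — 3 statements merged into one kernel-verified Lean document; each statement's English description precedes it below -/
import Mathlib

section
/- Fix d ∈ ℕ and T > 0. With M = M(N) such that M/N → T as N → ∞ (e.g., M = ⌊NT⌋), the limit as N → ∞ of C(M+N-d-2, N-2) / C(M+N-1, N-1) equals (1/(T+1))·(T/(T+1))^d, the geometric distribution with success probability 1/(T+1). -/
open Filter Finset

private lemma prod_cast_sub (a k : ℕ) (h : k ≤ a) :
    (∏ i ∈ range k, ((a : ℝ) - i)) = (a.descFactorial k : ℝ) := by
  rw [Nat.descFactorial_eq_prod_range, Nat.cast_prod]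
  refine prod_congr rfl fun i hi => ?_
  simp only [mem_range] at hi
  rw [Nat.cast_sub (by omega)]

private lemma ratio_eq (d m n : ℕ) (hm : d ≤ m) (hn : 2 ≤ n) :
    ((m + n - d - 2).choose (n - 2) : ℝ) / ((m + n - 1).choose (n - 1))
      = (((n : ℝ) - 1) * ∏ i ∈ range d, ((m : ℝ) - i))
        / (∏ j ∈ range (d + 1), ((m : ℝ) + n - 1 - j)) := by
  have h1 : n - 2 ≤ m + n - d - 2 := by omega
  have h2 : n - 1 ≤ m + n - 1 := by omega
  have e1 : m + n - d - 2 - (n - 2) = m - d := by omega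
  have e2 : m + n - 1 - (n - 1) = m := by omega
  have hp1 : (∏ i ∈ range d, ((m : ℝ) - i)) = (m.descFactorial d : ℝ) :=
    prod_cast_sub m d hm
  have hcast : ∀ j ∈ range (d + 1), (m : ℝ) + n - 1 - j = ((m + n - 1 : ℕ) : ℝ) - j := by
    intro j _
    have : ((m + n - 1 : ℕ) : ℝ) = (m : ℝ) + n - 1 := by
      rw [Nat.cast_sub (by omega)]; push_cast; ring
    rw [this]
  have hp2 : (∏ j ∈ range (d + 1), ((m : ℝ) + n - 1 - j))
      = ((m + n - 1).descFactorial (d + 1) : ℝ) := by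
    rw [prod_congr rfl hcast, prod_cast_sub (m + n - 1) (d + 1) (by omega)]
  have f1 : Nat.factorial (m - d) * m.descFactorial d = Nat.factorial m :=
    Nat.factorial_mul_descFactorial hm
  have f2 : Nat.factorial (m + n - 1 - (d + 1)) * (m + n - 1).descFactorial (d + 1)
      = Nat.factorial (m + n - 1) := Nat.factorial_mul_descFactorial (by omega)
  have e3 : m + n - 1 - (d + 1) = m + n - d - 2 := by omega
  rw [e3] at f2
  have f3 : Nat.factorial (n - 1) = (n - 1) * Nat.factorial (n - 2) := by
    have : n - 1 = (n - 2) + 1 := by omega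
    rw [this, Nat.factorial_succ]
  rw [Nat.cast_choose ℝ h1, Nat.cast_choose ℝ h2, e1, e2, hp1, hp2]
  have hcn1 : ((n : ℝ) - 1) = ((n - 1 : ℕ) : ℝ) := by
    rw [Nat.cast_sub (by omega)]; push_cast; ring
  rw [hcn1]
  have hd1 : (0:ℝ) < ((m + n - 1).descFactorial (d + 1) : ℝ) := by
    rw [← hp2]
    apply prod_pos
    intro j hj
    simp only [mem_range] at hj
    have h3 : (j:ℝ) ≤ (m : ℝ) := by exact_mod_cast (show j ≤ m by omega)
    have h4 : (2:ℝ) ≤ n := by exact_mod_cast hn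
    linarith
  have key : Nat.factorial (m + n - d - 2) * (Nat.factorial (n - 1) * Nat.factorial m)
      * ((m + n - 1).descFactorial (d + 1))
      = (n - 1) * m.descFactorial d
        * (Nat.factorial (n - 2) * Nat.factorial (m - d) * Nat.factorial (m + n - 1)) := by
    rw [← f1, ← f2, f3]; ring
  have keyR : ((m + n - d - 2).factorial : ℝ) * ((n - 1).factorial * m.factorial)
      * ((m + n - 1).descFactorial (d + 1))
      = ((n - 1 : ℕ) : ℝ) * (m.descFactorial d)
        * ((n - 2).factorial * (m - d).factorial * (m + n - 1).factorial) := by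
    exact_mod_cast congrArg (Nat.cast : ℕ → ℝ) key
  rw [div_div_eq_mul_div, div_eq_div_iff (by positivity) hd1.ne']
  rw [div_mul_eq_mul_div, div_mul_eq_mul_div, div_eq_iff (by positivity)]
  linear_combination keyR

/-- Large population limit: if `M N / N → T > 0`, then the stationary probability that a
fixed agent owns `d` dollars, `C(M+N-d-2, N-2)/C(M+N-1, N-1)`, converges to the geometric
distribution `(1/(T+1))·(T/(T+1))^d`. -/
theorem choose_ratio_tendsto_geometric (d : ℕ) (T : ℝ) (hT : 0 < T) (M : ℕ → ℕ)
    (hM : Tendsto (fun N => (M N : ℝ) / N) atTop (nhds T)) :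
    Tendsto
      (fun N => ((M N + N - d - 2).choose (N - 2) : ℝ) / ((M N + N - 1).choose (N - 1)))
      atTop (nhds ((1 / (T + 1)) * (T / (T + 1)) ^ d)) := by
  -- M N → ∞
  have hMtop : Tendsto M atTop atTop := by
    rw [← tendsto_natCast_atTop_iff (R := ℝ)]
    have : Tendsto (fun N : ℕ => ((M N : ℝ) / N) * N) atTop atTop :=
      Tendsto.pos_mul_atTop hT hM tendsto_natCast_atTop_atTop
    refine this.congr' ?_
    filter_upwards [eventually_ge_atTop 1] with N hN
    field_simp
  have hMd : ∀ᶠ N in atTop, d ≤ M N := hMtop.eventually_ge_atTop d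
  -- define the normalized function
  set h : ℕ → ℝ := fun N =>
    ((((N : ℝ) - 1) / N) * ∏ i ∈ range d, ((M N : ℝ) - i) / N)
      / (∏ j ∈ range (d + 1), ((M N : ℝ) + N - 1 - j) / N) with hh
  have htendsto : Tendsto h atTop (nhds ((1 / (T + 1)) * (T / (T + 1)) ^ d)) := by
    have hinv : Tendsto (fun N : ℕ => (N : ℝ)⁻¹) atTop (nhds 0) :=
      tendsto_inv_atTop_zero.comp tendsto_natCast_atTop_atTop
    have t1 : Tendsto (fun N : ℕ => ((N : ℝ) - 1) / N) atTop (nhds 1) := by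
      have : Tendsto (fun N : ℕ => 1 - (N : ℝ)⁻¹) atTop (nhds 1) := by
        simpa using tendsto_const_nhds.sub hinv
      refine this.congr' ?_
      filter_upwards [eventually_ge_atTop 1] with N hN
      have : (N : ℝ) ≠ 0 := by positivity
      field_simp
    have t2 : ∀ i : ℕ, Tendsto (fun N : ℕ => ((M N : ℝ) - i) / N) atTop (nhds T) := by
      intro i
      have : Tendsto (fun N : ℕ => (M N : ℝ) / N - i * (N : ℝ)⁻¹) atTop (nhds T) := by
        simpa using hM.sub ((tendsto_const_nhds (x := (i : ℝ))).mul hinv)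
      refine this.congr fun N => ?_
      rw [sub_div, div_eq_mul_inv ((i:ℝ))]
    have t3 : ∀ j : ℕ, Tendsto (fun N : ℕ => ((M N : ℝ) + N - 1 - j) / N) atTop (nhds (T + 1)) := by
      intro j
      have : Tendsto (fun N : ℕ => (M N : ℝ) / N + 1 - (1 + j) * (N : ℝ)⁻¹) atTop
          (nhds (T + 1)) := by
        simpa using (hM.add tendsto_const_nhds).sub
          ((tendsto_const_nhds (x := (1 + j : ℝ))).mul hinv)
      refine this.congr' ?_
      filter_upwards [eventually_ge_atTop 1] with N hN
      have hN0 : (N : ℝ) ≠ 0 := by positivity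
      field_simp
      ring
    have pnum : Tendsto (fun N : ℕ => ∏ i ∈ range d, ((M N : ℝ) - i) / N) atTop
        (nhds (∏ _i ∈ range d, T)) :=
      tendsto_finset_prod _ (fun i _ => t2 i)
    have pden : Tendsto (fun N : ℕ => ∏ j ∈ range (d + 1), ((M N : ℝ) + N - 1 - j) / N) atTop
        (nhds (∏ _j ∈ range (d + 1), (T + 1))) :=
      tendsto_finset_prod _ (fun j _ => t3 j)
    have hlim : (1 * ∏ _i ∈ range d, T) / (∏ _j ∈ range (d + 1), (T + 1))
        = (1 / (T + 1)) * (T / (T + 1)) ^ d := by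
      rw [prod_const, prod_const, card_range, card_range]
      have hT1 : T + 1 ≠ 0 := by positivity
      field_simp
      have hX : (1 + T)⁻¹ ^ d * (1 + T) ^ d = 1 := by
        rw [← mul_pow, inv_mul_cancel₀ (by positivity), one_pow]
      linear_combination (-(T * T ^ d + T ^ d)) * hX
    rw [← hlim]
    exact ((t1.mul pnum).div pden (by
      rw [prod_const, card_range]
      positivity))
  refine htendsto.congr' ?_
  filter_upwards [hMd, eventually_ge_atTop 2, hMtop.eventually_ge_atTop 1] with N hd2 hN2 hM1
  have hN0 : (N : ℝ) ≠ 0 := by positivity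
  simp only [hh]
  rw [ratio_eq d (M N) N hd2 hN2]
  have hQ : (0:ℝ) < ∏ j ∈ range (d + 1), ((M N : ℝ) + N - 1 - j) := by
    apply prod_pos
    intro j hj
    simp only [mem_range] at hj
    have h3 : (j:ℝ) ≤ (M N : ℝ) := by exact_mod_cast (show j ≤ M N by omega)
    have h4 : (2:ℝ) ≤ N := by exact_mod_cast hN2
    linarith
  rw [prod_div_distrib, prod_div_distrib, prod_const, prod_const, card_range, card_range]
  rw [div_div_eq_mul_div, div_eq_div_iff (by positivity) hQ.ne']
  field_simp
  ring
end

section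
/- The multinomial distribution π(ξ) = (M choose ξ(x_1),…,ξ(x_N)) · ∏_{w∈V} (deg(w)/∑_{z∈V} deg(z))^{ξ(w)} on 𝒜_{N,M} is reversible (hence stationary) for the Model 2 Markov chain: π(ξ)p(ξ,ξ') = π(ξ')p(ξ',ξ) for all ξ, ξ'. -/
/-- The result of moving one dollar from `x` to `y` in configuration `ξ`
(nothing happens if `ξ x = 0`). -/
def moveDollar {V : Type*} [DecidableEq V] (ξ : V → ℕ) (x y : V) : V → ℕ :=
  fun z => if ξ x = 0 then ξ z
    else ξ z - (if z = x then 1 else 0) + (if z = y then 1 else 0)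


/-- Model 2 transition probabilities: `p(ξ, ξ^{→xy}) = ξ(x)/(M·deg(x))` for each
oriented edge `(x,y)`. -/
def pTwo {V : Type*} [Fintype V] [DecidableEq V] (G : SimpleGraph V) [DecidableRel G.Adj]
    (M : ℕ) (ξ ξ' : V → ℕ) : ℚ :=
  ∑ e ∈ Finset.univ.filter (fun e : V × V => G.Adj e.1 e.2 ∧ moveDollar ξ e.1 e.2 = ξ'),
    (ξ e.1 : ℚ) / ((M : ℚ) * (G.degree e.1 : ℚ))

/-- The multinomial distribution on `𝒜_{N,M}` with marginal weights
`π̄(w) = deg(w)/∑_z deg(z)`. -/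
def piMulti {V : Type*} [Fintype V] [DecidableEq V] (G : SimpleGraph V)
    [DecidableRel G.Adj] (ξ : V → ℕ) : ℚ :=
  (Nat.multinomial Finset.univ ξ : ℚ)
    * ∏ w, ((G.degree w : ℚ) / (∑ z, (G.degree z : ℚ))) ^ ξ w

section aux

variable {V : Type*} [DecidableEq V]

lemma moveDollar_x {ξ : V → ℕ} {x y : V} (hxy : x ≠ y) (hx : ξ x ≠ 0) :
    moveDollar ξ x y x = ξ x - 1 := by simp [moveDollar, hx, hxy]

lemma moveDollar_y {ξ : V → ℕ} {x y : V} (hxy : x ≠ y) (hx : ξ x ≠ 0) :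
    moveDollar ξ x y y = ξ y + 1 := by simp [moveDollar, hx, hxy.symm]

lemma moveDollar_other {ξ : V → ℕ} {x y z : V} (hx : ξ x ≠ 0) (hzx : z ≠ x) (hzy : z ≠ y) :
    moveDollar ξ x y z = ξ z := by simp [moveDollar, hx, hzx, hzy]

lemma moveDollar_involutive {ξ : V → ℕ} {x y : V} (hxy : x ≠ y) (hx : ξ x ≠ 0) :
    moveDollar (moveDollar ξ x y) y x = ξ := by
  have hy : moveDollar ξ x y y ≠ 0 := by rw [moveDollar_y hxy hx]; omega
  funext z
  by_cases hzx : z = x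
  · subst hzx
    rw [moveDollar_y hxy.symm hy, moveDollar_x hxy hx]
    omega
  · by_cases hzy : z = y
    · subst hzy
      rw [moveDollar_x hxy.symm hy, moveDollar_y hxy hx]
      omega
    · rw [moveDollar_other hy hzy hzx, moveDollar_other hx hzx hzy]

variable [Fintype V]

/-- Product identity. -/
lemma prod_moveDollar (p : V → ℚ) {ξ : V → ℕ} {x y : V} (hxy : x ≠ y) (hx : ξ x ≠ 0) :
    (∏ w, p w ^ (moveDollar ξ x y w)) * p x = (∏ w, p w ^ ξ w) * p y := by
  have hyx : y ∈ Finset.univ.erase x := Finset.mem_erase.2 ⟨fun h => hxy h.symm, Finset.mem_univ y⟩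
  have key : ∀ (f : V → ℚ),
      ∏ w, f w = f x * (f y * ∏ w ∈ (Finset.univ.erase x).erase y, f w) := by
    intro f
    rw [Finset.mul_prod_erase _ _ hyx, Finset.mul_prod_erase _ _ (Finset.mem_univ x)]
  rw [key (fun w => p w ^ moveDollar ξ x y w), key (fun w => p w ^ ξ w)]
  have hrest : ∏ w ∈ (Finset.univ.erase x).erase y, p w ^ moveDollar ξ x y w
      = ∏ w ∈ (Finset.univ.erase x).erase y, p w ^ ξ w := by
    refine Finset.prod_congr rfl fun w hw => ?_
    simp only [Finset.mem_erase] at hw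
    rw [moveDollar_other hx hw.2.1 hw.1]
  rw [hrest, moveDollar_x hxy hx, moveDollar_y hxy hx]
  obtain ⟨k, hk⟩ : ∃ k, ξ x = k + 1 := ⟨ξ x - 1, by omega⟩
  rw [hk]
  simp only [Nat.add_sub_cancel]
  ring

/-- Factorial identity (in ℕ). -/
lemma factorial_moveDollar {ξ : V → ℕ} {x y : V} (hxy : x ≠ y) (hx : ξ x ≠ 0) :
    (∏ w, (moveDollar ξ x y w).factorial) * ξ x
      = (∏ w, (ξ w).factorial) * (ξ y + 1) := by
  have hyx : y ∈ Finset.univ.erase x := Finset.mem_erase.2 ⟨fun h => hxy h.symm, Finset.mem_univ y⟩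
  have key : ∀ (f : V → ℕ),
      ∏ w, f w = f x * (f y * ∏ w ∈ (Finset.univ.erase x).erase y, f w) := by
    intro f
    rw [Finset.mul_prod_erase _ _ hyx, Finset.mul_prod_erase _ _ (Finset.mem_univ x)]
  rw [key (fun w => (moveDollar ξ x y w).factorial), key (fun w => (ξ w).factorial)]
  have hrest : ∏ w ∈ (Finset.univ.erase x).erase y, (moveDollar ξ x y w).factorial
      = ∏ w ∈ (Finset.univ.erase x).erase y, (ξ w).factorial := by
    refine Finset.prod_congr rfl fun w hw => ?_
    simp only [Finset.mem_erase] at hw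
    rw [moveDollar_other hx hw.2.1 hw.1]
  rw [hrest, moveDollar_x hxy hx, moveDollar_y hxy hx]
  obtain ⟨k, hk⟩ : ∃ k, ξ x = k + 1 := ⟨ξ x - 1, by omega⟩
  rw [hk]
  simp only [Nat.add_sub_cancel, Nat.factorial_succ]
  ring

/-- Multinomial identity (in ℚ). -/
lemma multinomial_moveDollar {ξ : V → ℕ} {x y : V} (hxy : x ≠ y) (hx : ξ x ≠ 0) :
    (Nat.multinomial Finset.univ (moveDollar ξ x y) : ℚ) * (ξ y + 1)
      = (Nat.multinomial Finset.univ ξ : ℚ) * (ξ x) := by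
  have hsum : ∑ w, moveDollar ξ x y w = ∑ w, ξ w := by
    have hyx : y ∈ Finset.univ.erase x :=
      Finset.mem_erase.2 ⟨fun h => hxy h.symm, Finset.mem_univ y⟩
    have key : ∀ (f : V → ℕ),
        ∑ w, f w = f x + (f y + ∑ w ∈ (Finset.univ.erase x).erase y, f w) := by
      intro f
      rw [Finset.add_sum_erase _ _ hyx, Finset.add_sum_erase _ _ (Finset.mem_univ x)]
    rw [key (moveDollar ξ x y), key ξ]
    have hrest : ∑ w ∈ (Finset.univ.erase x).erase y, moveDollar ξ x y w
        = ∑ w ∈ (Finset.univ.erase x).erase y, ξ w := by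
      refine Finset.sum_congr rfl fun w hw => ?_
      simp only [Finset.mem_erase] at hw
      rw [moveDollar_other hx hw.2.1 hw.1]
    rw [hrest, moveDollar_x hxy hx, moveDollar_y hxy hx]
    omega
  have h1 := Nat.multinomial_spec Finset.univ (moveDollar ξ x y)
  have h2 := Nat.multinomial_spec Finset.univ ξ
  have h3 := factorial_moveDollar hxy hx
  -- cast to ℚ
  have q1 : ((∏ w, (moveDollar ξ x y w).factorial : ℕ) : ℚ)
      * (Nat.multinomial Finset.univ (moveDollar ξ x y) : ℚ)
      = ((∑ w, ξ w).factorial : ℚ) := by rw [hsum] at h1; exact_mod_cast congrArg (Nat.cast : ℕ → ℚ) h1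
  have q2 : ((∏ w, (ξ w).factorial : ℕ) : ℚ) * (Nat.multinomial Finset.univ ξ : ℚ)
      = ((∑ w, ξ w).factorial : ℚ) := by exact_mod_cast congrArg (Nat.cast : ℕ → ℚ) h2
  have q3 : ((∏ w, (moveDollar ξ x y w).factorial : ℕ) : ℚ) * (ξ x : ℚ)
      = ((∏ w, (ξ w).factorial : ℕ) : ℚ) * ((ξ y : ℚ) + 1) := by exact_mod_cast congrArg (Nat.cast : ℕ → ℚ) h3
  have hA' : ((∏ w, (moveDollar ξ x y w).factorial : ℕ) : ℚ) ≠ 0 := by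
    have : 0 < ∏ w, (moveDollar ξ x y w).factorial :=
      Finset.prod_pos fun w _ => Nat.factorial_pos _
    exact_mod_cast this.ne'
  have hA : ((∏ w, (ξ w).factorial : ℕ) : ℚ) ≠ 0 := by
    have : 0 < ∏ w, (ξ w).factorial :=
      Finset.prod_pos fun w _ => Nat.factorial_pos _
    exact_mod_cast this.ne'
  apply mul_right_cancel₀ (mul_ne_zero hA hA')
  linear_combination ((ξ y : ℚ) + 1) * ((∏ w, (ξ w).factorial : ℕ) : ℚ) * q1
    - (ξ x : ℚ) * ((∏ w, (moveDollar ξ x y w).factorial : ℕ) : ℚ) * q2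
    - (((∑ w, ξ w).factorial : ℕ) : ℚ) * q3

end aux

lemma term_eq {V : Type*} [Fintype V] [DecidableEq V] (G : SimpleGraph V) [DecidableRel G.Adj]
    {M : ℕ} (hM : M ≠ 0) {ξ : V → ℕ} {x y : V} (hxy : G.Adj x y) (hx : ξ x ≠ 0) :
    piMulti G ξ * ((ξ x : ℚ) / ((M : ℚ) * (G.degree x : ℚ)))
      = piMulti G (moveDollar ξ x y)
        * ((moveDollar ξ x y y : ℚ) / ((M : ℚ) * (G.degree y : ℚ))) := by
  have hne := hxy.ne
  have hdx : (0 : ℚ) < (G.degree x : ℚ) := by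
    exact_mod_cast (G.degree_pos_iff_exists_adj x).2 ⟨y, hxy⟩
  have hdy : (0 : ℚ) < (G.degree y : ℚ) := by
    exact_mod_cast (G.degree_pos_iff_exists_adj y).2 ⟨x, hxy.symm⟩
  have hD : (0 : ℚ) < ∑ z, (G.degree z : ℚ) :=
    Finset.sum_pos' (fun z _ => by positivity) ⟨x, Finset.mem_univ x, hdx⟩
  have hMQ : (M : ℚ) ≠ 0 := Nat.cast_ne_zero.2 hM
  have q2 := prod_moveDollar (fun w => (G.degree w : ℚ) / (∑ z, (G.degree z : ℚ))) hne hx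
  simp only [div_pow] at q2
  have q1 := multinomial_moveDollar (x := x) (y := y) (ξ := ξ) hne hx
  rw [moveDollar_y hne hx]
  unfold piMulti
  push_cast
  simp only [div_pow, Finset.prod_div_distrib] at q2 ⊢
  field_simp at q2 ⊢
  set m := (Nat.multinomial Finset.univ ξ : ℚ) with hm
  set m' := (Nat.multinomial Finset.univ (moveDollar ξ x y) : ℚ) with hm'
  set P := ∏ w, (G.degree w : ℚ) ^ ξ w with hP
  set P' := ∏ w, (G.degree w : ℚ) ^ moveDollar ξ x y w with hP'
  set Q := ∏ w, (∑ z, (G.degree z : ℚ)) ^ ξ w with hQ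
  set Q' := ∏ w, (∑ z, (G.degree z : ℚ)) ^ moveDollar ξ x y w with hQ'
  have q2' : P' * (G.degree x : ℚ) * Q = P * (G.degree y : ℚ) * Q' :=
    mul_right_cancel₀ hD.ne' (by linear_combination (∑ z, (G.degree z : ℚ)) * q2)
  linear_combination (-(P' * Q * (G.degree x : ℚ))) * q1
    + (-(m * (ξ x : ℚ))) * q2'

/-- The multinomial distribution `π` is reversible (hence stationary) for the Model 2
Markov chain: `π(ξ)p(ξ,ξ') = π(ξ')p(ξ',ξ)`. -/
theorem multinomial_reversible_model_two {V : Type*} [Fintype V] [DecidableEq V]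
    (G : SimpleGraph V) [DecidableRel G.Adj] (hG : G.Connected) (M : ℕ) (hM : 1 ≤ M)
    (ξ ξ' : V → ℕ) (hξ : ∑ x, ξ x = M) (hξ' : ∑ x, ξ' x = M) :
    piMulti G ξ * pTwo G M ξ ξ' = piMulti G ξ' * pTwo G M ξ' ξ := by
  have hM0 : M ≠ 0 := by omega
  unfold pTwo
  rw [Finset.mul_sum, Finset.mul_sum]
  have restrict : ∀ (η η' : V → ℕ),
      ∑ e ∈ Finset.univ.filter
          (fun e : V × V => G.Adj e.1 e.2 ∧ moveDollar η e.1 e.2 = η'),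
        piMulti G η * ((η e.1 : ℚ) / ((M : ℚ) * (G.degree e.1 : ℚ)))
      = ∑ e ∈ Finset.univ.filter
          (fun e : V × V => G.Adj e.1 e.2 ∧ moveDollar η e.1 e.2 = η' ∧ η e.1 ≠ 0),
        piMulti G η * ((η e.1 : ℚ) / ((M : ℚ) * (G.degree e.1 : ℚ))) := by
    intro η η'
    refine (Finset.sum_subset ?_ ?_).symm
    · intro e he
      simp only [Finset.mem_filter] at he ⊢
      exact ⟨he.1, he.2.1, he.2.2.1⟩
    · intro e he hne
      simp only [Finset.mem_filter] at he hne
      have h0 : η e.1 = 0 := by tauto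
      rw [h0]
      simp
  rw [restrict ξ ξ', restrict ξ' ξ]
  refine Finset.sum_nbij' Prod.swap Prod.swap ?_ ?_ ?_ ?_ ?_
  · intro e he
    simp only [Finset.mem_filter, Finset.mem_univ, true_and, Prod.fst_swap,
      Prod.snd_swap] at he ⊢
    obtain ⟨hadj, hmove, hne⟩ := he
    subst hmove
    refine ⟨hadj.symm, moveDollar_involutive hadj.ne hne, ?_⟩
    rw [moveDollar_y hadj.ne hne]
    omega
  · intro e he
    simp only [Finset.mem_filter, Finset.mem_univ, true_and, Prod.fst_swap,
      Prod.snd_swap] at he ⊢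
    obtain ⟨hadj, hmove, hne⟩ := he
    subst hmove
    refine ⟨hadj.symm, moveDollar_involutive hadj.ne hne, ?_⟩
    rw [moveDollar_y hadj.ne hne]
    omega
  · intro e _; exact Prod.swap_swap e
  · intro e _; exact Prod.swap_swap e
  · intro e he
    simp only [Finset.mem_filter, Finset.mem_univ, true_and] at he
    obtain ⟨hadj, hmove, hne⟩ := he
    subst hmove
    simp only [Prod.fst_swap, Prod.snd_swap]
    exact term_eq G hM0 hadj hne
end

section
/- For the Model 1 chain on a connected graph with N ≥ 2 and M ≥ 1, the unique stationary distribution is uniform on 𝒜_{N,M}, and for any initial configuration the distribution at time t converges: lim_{t→∞} P(ξ_t = ξ) = 1/C(M+N−1, N−1) for every ξ ∈ 𝒜_{N,M}. -/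
open Filter

/-- The state space `𝒜_{N,M}` of configurations with `M` dollars, as a finite set. -/
def stateSpace (V : Type*) [Fintype V] [DecidableEq V] (M : ℕ) : Finset (V → ℕ) :=
  (Fintype.piFinset fun _ : V => Finset.range (M + 1)).filter fun ξ => ∑ x, ξ x = M

/-- Model 1 transition probabilities: an oriented edge `(x,y)` is chosen uniformly among
the `2|E|` oriented edges and one dollar moves from `x` to `y` if possible. -/
noncomputable def pOne {V : Type*} [Fintype V] [DecidableEq V] (G : SimpleGraph V)
    [DecidableRel G.Adj] (ξ ξ' : V → ℕ) : ℝ :=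
  ((Finset.univ.filter fun e : V × V => G.Adj e.1 e.2 ∧ moveDollar ξ e.1 e.2 = ξ').card : ℝ)
    / ((Finset.univ.filter fun e : V × V => G.Adj e.1 e.2).card : ℝ)

/-- `t`-step transition probabilities of Model 1. -/
noncomputable def pOneIter {V : Type*} [Fintype V] [DecidableEq V] (G : SimpleGraph V)
    [DecidableRel G.Adj] (M : ℕ) : ℕ → (V → ℕ) → (V → ℕ) → ℝ
  | 0, ξ, ξ' => if ξ = ξ' then 1 else 0
  | t + 1, ξ, ξ' => ∑ η ∈ stateSpace V M, pOneIter G M t ξ η * pOne G η ξ'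

set_option linter.unusedSectionVars false
set_option linter.unusedVariables false

section Basic
variable {V : Type*} [Fintype V] [DecidableEq V] {M : ℕ}

lemma mem_stateSpace {ξ : V → ℕ} : ξ ∈ stateSpace V M ↔ ∑ x, ξ x = M := by
  constructor
  · intro h; exact (Finset.mem_filter.1 h).2
  · intro h
    refine Finset.mem_filter.2 ⟨Fintype.mem_piFinset.2 fun x => ?_, h⟩
    rw [Finset.mem_range, Nat.lt_succ_iff, ← h]
    exact Finset.single_le_sum (fun i _ => Nat.zero_le _) (Finset.mem_univ x)

/-- Move one dollar from u to v (unconditionally). -/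
def moveOne (ξ : V → ℕ) (u v : V) : V → ℕ :=
  fun z => ξ z - (if z = u then 1 else 0) + (if z = v then 1 else 0)

lemma moveDollar_eq_moveOne {ξ : V → ℕ} {u v : V} (h : ξ u ≠ 0) :
    moveDollar ξ u v = moveOne ξ u v := by
  funext z; simp [moveDollar, moveOne, h]

lemma sum_moveOne {ξ : V → ℕ} (u v : V) (h : 1 ≤ ξ u) :
    ∑ x, moveOne ξ u v x = ∑ x, ξ x := by
  unfold moveOne
  rw [Finset.sum_add_distrib, Finset.sum_ite_eq' (Finset.univ) v fun _ => 1]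
  have h2 : ∀ x ∈ Finset.univ, (if x = u then 1 else 0) ≤ ξ x := by
    intro x _; split
    · subst x; exact h
    · exact Nat.zero_le _
  rw [Finset.sum_tsub_distrib _ h2, Finset.sum_ite_eq' (Finset.univ) u fun _ => 1]
  have h3 : 1 ≤ ∑ x, ξ x :=
    le_trans h (Finset.single_le_sum (fun i _ => Nat.zero_le (ξ i)) (Finset.mem_univ u))
  simp
  omega

lemma moveOne_mem {ξ : V → ℕ} (hξ : ξ ∈ stateSpace V M) {u : V} (v : V) (h : 1 ≤ ξ u) :
    moveOne ξ u v ∈ stateSpace V M := by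
  rw [mem_stateSpace] at hξ ⊢
  rw [sum_moveOne u v h, hξ]

lemma moveDollar_mem {ξ : V → ℕ} (hξ : ξ ∈ stateSpace V M) (u v : V) :
    moveDollar ξ u v ∈ stateSpace V M := by
  by_cases h : ξ u = 0
  · have : moveDollar ξ u v = ξ := by funext z; simp [moveDollar, h]
    rwa [this]
  · rw [moveDollar_eq_moveOne h]
    exact moveOne_mem hξ v (Nat.one_le_iff_ne_zero.2 h)

lemma moveOne_self {ξ : V → ℕ} {u : V} (h : 1 ≤ ξ u) : moveOne ξ u u = ξ := by
  funext z; unfold moveOne; split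
  · subst z; omega
  · simp

end Basic

/-- The oriented edge set as a finset of ordered pairs. -/
def oEdges {V : Type*} [Fintype V] (G : SimpleGraph V) [DecidableRel G.Adj] :
    Finset (V × V) := Finset.univ.filter fun e : V × V => G.Adj e.1 e.2

section Trans
variable {V : Type*} [Fintype V] [DecidableEq V] {G : SimpleGraph V} [DecidableRel G.Adj]
  {M : ℕ}

local notation "S" => stateSpace V M

lemma exists_adj (hG : G.Connected) (h2 : 1 < Fintype.card V) : ∃ e : V × V, G.Adj e.1 e.2 := by
  obtain ⟨u, v, huv⟩ := Fintype.exists_pair_of_one_lt_card h2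
  obtain ⟨w⟩ := hG u v
  cases w with
  | nil => exact absurd rfl huv
  | cons h p => exact ⟨(u, _), h⟩

lemma edges_card_pos (hG : G.Connected) (h2 : 1 < Fintype.card V) :
    0 < (oEdges G).card := by
  obtain ⟨e, he⟩ := exists_adj hG h2
  exact Finset.card_pos.2 ⟨e, Finset.mem_filter.2 ⟨Finset.mem_univ e, he⟩⟩

lemma pOne_nonneg (ξ ξ' : V → ℕ) : 0 ≤ pOne G ξ ξ' :=
  div_nonneg (Nat.cast_nonneg _) (Nat.cast_nonneg _)

lemma pOne_eq (ξ ξ' : V → ℕ) :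
    pOne G ξ ξ' = (((oEdges G).filter fun e => moveDollar ξ e.1 e.2 = ξ').card : ℝ)
      / ((oEdges G).card : ℝ) := by
  unfold pOne oEdges
  rw [Finset.filter_filter]

lemma pOne_row_sum (hE : 0 < (oEdges G).card) {ξ : V → ℕ} (hξ : ξ ∈ S) :
    ∑ ξ' ∈ S, pOne G ξ ξ' = 1 := by
  rw [Finset.sum_congr rfl fun ξ' _ => pOne_eq ξ ξ']
  rw [← Finset.sum_div, div_eq_one_iff_eq (by exact_mod_cast hE.ne'), ← Nat.cast_sum]
  norm_cast
  exact (Finset.card_eq_sum_card_fiberwise fun e _ => moveDollar_mem hξ e.1 e.2).symm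

lemma moveOne_moveOne {ξ : V → ℕ} {x y : V} (hxy : x ≠ y) (hx : 1 ≤ ξ x) :
    moveOne (moveOne ξ x y) y x = ξ := by
  funext z
  simp only [moveOne]
  split_ifs <;> first | omega | (subst_vars; omega)

lemma pOne_symm_aux {ξ ξ' : V → ℕ} (hne : ξ ≠ ξ') {x y : V} (hadj : G.Adj x y)
    (hmv : moveDollar ξ x y = ξ') : moveDollar ξ' y x = ξ := by
  have hx : ξ x ≠ 0 := by
    intro h0
    apply hne
    have : moveDollar ξ x y = ξ := by funext z; simp [moveDollar, h0]
    rw [← hmv, this]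
  have hxy : x ≠ y := G.ne_of_adj hadj
  rw [moveDollar_eq_moveOne hx] at hmv
  have hy' : ξ' y ≠ 0 := by
    rw [← hmv]; simp [moveOne, hxy, (Ne.symm hxy)]
  rw [moveDollar_eq_moveOne hy', ← hmv, moveOne_moveOne hxy (Nat.one_le_iff_ne_zero.2 hx)]

lemma pOne_symm (ξ ξ' : V → ℕ) : pOne G ξ ξ' = pOne G ξ' ξ := by
  by_cases hne : ξ = ξ'
  · rw [hne]
  unfold pOne
  congr 1
  norm_cast
  refine Finset.card_bij' (fun e _ => (e.2, e.1)) (fun e _ => (e.2, e.1)) ?_ ?_ ?_ ?_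
  · rintro ⟨x, y⟩ he
    rw [Finset.mem_filter] at he ⊢
    obtain ⟨-, hadj, hmv⟩ := he
    exact ⟨Finset.mem_univ _, hadj.symm, pOne_symm_aux hne hadj hmv⟩
  · rintro ⟨x, y⟩ he
    rw [Finset.mem_filter] at he ⊢
    obtain ⟨-, hadj, hmv⟩ := he
    exact ⟨Finset.mem_univ _, hadj.symm, pOne_symm_aux (Ne.symm hne) hadj hmv⟩
  · intro e _; rfl
  · intro e _; rfl

lemma pOne_col_sum (hE : 0 < (oEdges G).card) {ξ' : V → ℕ} (hξ' : ξ' ∈ S) :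
    ∑ ξ ∈ S, pOne G ξ ξ' = 1 := by
  rw [Finset.sum_congr rfl fun ξ _ => pOne_symm ξ ξ']
  exact pOne_row_sum hE hξ'

lemma pOne_pos_of_move {ξ : V → ℕ} {x y : V} (hadj : G.Adj x y) :
    0 < pOne G ξ (moveDollar ξ x y) := by
  apply div_pos
  · have : (x, y) ∈ Finset.univ.filter
        fun e : V × V => G.Adj e.1 e.2 ∧ moveDollar ξ e.1 e.2 = moveDollar ξ x y :=
      Finset.mem_filter.2 ⟨Finset.mem_univ _, hadj, rfl⟩
    exact_mod_cast Finset.card_pos.2 ⟨_, this⟩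
  · have : (x, y) ∈ Finset.univ.filter (fun e : V × V => G.Adj e.1 e.2) :=
      Finset.mem_filter.2 ⟨Finset.mem_univ _, hadj⟩
    exact_mod_cast Finset.card_pos.2 ⟨_, this⟩

end Trans

section Iter
variable {V : Type*} [Fintype V] [DecidableEq V] {G : SimpleGraph V} [DecidableRel G.Adj]
  {M : ℕ}

local notation "S" => stateSpace V M

lemma pOneIter_zero (ξ ξ' : V → ℕ) :
    pOneIter G M 0 ξ ξ' = if ξ = ξ' then (1:ℝ) else 0 := rfl

lemma pOneIter_succ (t : ℕ) (ξ ξ' : V → ℕ) :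
    pOneIter G M (t + 1) ξ ξ' = ∑ η ∈ S, pOneIter G M t ξ η * pOne G η ξ' := rfl

lemma pOneIter_nonneg (t : ℕ) (ξ ξ' : V → ℕ) : 0 ≤ pOneIter G M t ξ ξ' := by
  induction t generalizing ξ ξ' with
  | zero => rw [pOneIter_zero]; positivity
  | succ t ih =>
    rw [pOneIter_succ]
    exact Finset.sum_nonneg fun η _ => mul_nonneg (ih ξ η) (pOne_nonneg η ξ')

lemma pOneIter_chapman (s : ℕ) (ξ : V → ℕ) : ∀ t : ℕ, ∀ ξ' ∈ S,
    pOneIter G M (s + t) ξ ξ' = ∑ η ∈ S, pOneIter G M s ξ η * pOneIter G M t η ξ' := by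
  intro t
  induction t with
  | zero =>
    intro ξ' hξ'
    rw [Nat.add_zero,
      Finset.sum_congr rfl fun η _ => by rw [pOneIter_zero, mul_ite, mul_one, mul_zero],
      Finset.sum_ite_eq' S ξ' (pOneIter G M s ξ), if_pos hξ']
  | succ t ih =>
    intro ξ' hξ'
    rw [show s + (t + 1) = (s + t) + 1 from rfl, pOneIter_succ,
      Finset.sum_congr rfl fun η hη => by rw [ih η hη, Finset.sum_mul], Finset.sum_comm]
    refine Finset.sum_congr rfl fun κ _ => ?_
    rw [pOneIter_succ, Finset.mul_sum]
    exact Finset.sum_congr rfl fun η _ => by ring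

lemma pOneIter_one {ξ : V → ℕ} (hξ : ξ ∈ S) (η : V → ℕ) :
    pOneIter G M 1 ξ η = pOne G ξ η := by
  rw [show (1:ℕ) = 0 + 1 from rfl, pOneIter_succ,
    Finset.sum_congr rfl fun κ _ => by rw [pOneIter_zero, ite_mul, one_mul, zero_mul],
    Finset.sum_ite_eq S ξ (fun κ => pOne G κ η), if_pos hξ]

lemma pOneIter_succ_left {ξ : V → ℕ} (hξ : ξ ∈ S) (t : ℕ) {ξ' : V → ℕ} (hξ' : ξ' ∈ S) :
    pOneIter G M (t + 1) ξ ξ' = ∑ η ∈ S, pOne G ξ η * pOneIter G M t η ξ' := by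
  have := pOneIter_chapman (G := G) (M := M) 1 ξ t ξ' hξ'
  rw [add_comm 1 t] at this
  rw [this]
  exact Finset.sum_congr rfl fun η _ => by rw [pOneIter_one hξ]

lemma pOneIter_symm (t : ℕ) {ξ ξ' : V → ℕ} (hξ : ξ ∈ S) (hξ' : ξ' ∈ S) :
    pOneIter G M t ξ ξ' = pOneIter G M t ξ' ξ := by
  induction t generalizing ξ ξ' with
  | zero => rw [pOneIter_zero, pOneIter_zero]; simp [eq_comm]
  | succ t ih =>
    rw [pOneIter_succ, pOneIter_succ_left hξ' t hξ]
    exact Finset.sum_congr rfl fun η hη => by rw [ih hξ hη, pOne_symm, mul_comm]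

lemma pOneIter_row_sum (hE : 0 < (oEdges G).card) (t : ℕ) {ξ : V → ℕ} (hξ : ξ ∈ S) :
    ∑ ξ' ∈ S, pOneIter G M t ξ ξ' = 1 := by
  induction t with
  | zero =>
    rw [Finset.sum_congr rfl fun ξ' _ => pOneIter_zero ξ ξ',
      Finset.sum_ite_eq S ξ (fun _ => (1:ℝ)), if_pos hξ]
  | succ t ih =>
    rw [Finset.sum_congr rfl fun ξ' _ => pOneIter_succ t ξ ξ', Finset.sum_comm,
      Finset.sum_congr rfl fun η hη => by
        rw [← Finset.mul_sum, pOne_row_sum hE hη, mul_one], ih]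

lemma pOneIter_col_sum (hE : 0 < (oEdges G).card) (t : ℕ) {ξ' : V → ℕ} (hξ' : ξ' ∈ S) :
    ∑ ξ ∈ S, pOneIter G M t ξ ξ' = 1 := by
  rw [Finset.sum_congr rfl fun ξ hξ => pOneIter_symm t hξ hξ']
  exact pOneIter_row_sum hE t hξ'

lemma pOneIter_pos_trans (s t : ℕ) {ξ η ξ' : V → ℕ} (hη : η ∈ S) (hξ' : ξ' ∈ S)
    (h1 : 0 < pOneIter G M s ξ η) (h2 : 0 < pOneIter G M t η ξ') :
    0 < pOneIter G M (s + t) ξ ξ' := by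
  rw [pOneIter_chapman s ξ t ξ' hξ']
  exact Finset.sum_pos'
    (fun κ _ => mul_nonneg (pOneIter_nonneg s ξ κ) (pOneIter_nonneg t κ ξ'))
    ⟨η, hη, mul_pos h1 h2⟩

end Iter

section Reach
variable {V : Type*} [Fintype V] [DecidableEq V] {G : SimpleGraph V} [DecidableRel G.Adj]
  {M : ℕ}

local notation "S" => stateSpace V M

/-- The configuration with all `M` dollars at `v₀`. -/
def allAt (M : ℕ) (v₀ : V) : V → ℕ := fun z => if z = v₀ then M else 0

lemma allAt_mem (v₀ : V) : allAt M v₀ ∈ S := by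
  rw [mem_stateSpace]
  unfold allAt
  rw [Finset.sum_ite_eq' Finset.univ v₀ (fun _ => M)]
  simp

lemma moveOne_moveOne_chain (ξ : V → ℕ) (u b v : V) :
    moveOne (moveOne ξ u b) b v = moveOne ξ u v := by
  funext z
  simp only [moveOne]
  split_ifs <;> omega

lemma reach_moveOne {u v : V} (w : G.Walk u v) :
    ∀ ξ, ξ ∈ S → 1 ≤ ξ u → ∃ t, 0 < pOneIter G M t ξ (moveOne ξ u v) := by
  induction w with
  | nil =>
    intro ξ hξ hu
    refine ⟨0, ?_⟩
    rw [moveOne_self hu, pOneIter_zero, if_pos rfl]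
    norm_num
  | @cons u b v h p ih =>
    intro ξ hξ hu
    set ξ₁ := moveOne ξ u b with hξ₁def
    have hub : u ≠ b := G.ne_of_adj h
    have hξ₁ : ξ₁ ∈ S := moveOne_mem hξ b hu
    have hξ₁b : 1 ≤ ξ₁ b := by simp [hξ₁def, moveOne]
    obtain ⟨t, ht⟩ := ih ξ₁ hξ₁ hξ₁b
    rw [hξ₁def, moveOne_moveOne_chain ξ u b v] at ht
    refine ⟨1 + t, ?_⟩
    refine pOneIter_pos_trans 1 t hξ₁ (moveOne_mem hξ v hu) ?_ ht
    rw [pOneIter_one hξ, hξ₁def, ← moveDollar_eq_moveOne (Nat.one_le_iff_ne_zero.1 hu)]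
    exact pOne_pos_of_move h

lemma eq_allAt_of_full {ξ : V → ℕ} (hξ : ξ ∈ S) {v₀ : V} (h : M ≤ ξ v₀) :
    ξ = allAt M v₀ := by
  rw [mem_stateSpace] at hξ
  have hle : ξ v₀ ≤ M := hξ ▸ Finset.single_le_sum (fun i _ => Nat.zero_le (ξ i)) (Finset.mem_univ v₀)
  have hv₀ : ξ v₀ = M := le_antisymm hle h
  have hsplit := Finset.add_sum_erase Finset.univ ξ (Finset.mem_univ v₀)
  rw [hξ, hv₀] at hsplit
  have hzero : ∀ z ∈ Finset.univ.erase v₀, ξ z = 0 :=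
    Finset.sum_eq_zero_iff.1 (by omega)
  funext z
  unfold allAt
  by_cases hz : z = v₀
  · rw [if_pos hz, hz, hv₀]
  · rw [if_neg hz]
    exact hzero z (Finset.mem_erase.2 ⟨hz, Finset.mem_univ z⟩)

lemma reach_allAt (hG : G.Connected) (v₀ : V) :
    ∀ ξ ∈ S, ∃ t, 0 < pOneIter G M t ξ (allAt M v₀) := by
  suffices h : ∀ k, ∀ ξ ∈ S, M - ξ v₀ ≤ k → ∃ t, 0 < pOneIter G M t ξ (allAt M v₀) by
    intro ξ hξ; exact h M ξ hξ (Nat.sub_le _ _)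
  intro k
  induction k with
  | zero =>
    intro ξ hξ hk
    refine ⟨0, ?_⟩
    rw [eq_allAt_of_full (v₀ := v₀) hξ (by omega), pOneIter_zero, if_pos rfl]
    norm_num
  | succ k ih =>
    intro ξ hξ hk
    by_cases hfull : M ≤ ξ v₀
    · refine ⟨0, ?_⟩
      rw [eq_allAt_of_full hξ hfull, pOneIter_zero, if_pos rfl]
      norm_num
    · -- there is a vertex u ≠ v₀ with a dollar
      have hsum : ∑ x, ξ x = M := mem_stateSpace.1 hξ
      have hsplit := Finset.add_sum_erase Finset.univ ξ (Finset.mem_univ v₀)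
      have hpos : 0 < ∑ z ∈ Finset.univ.erase v₀, ξ z := by omega
      obtain ⟨u, humem, hu⟩ : ∃ u ∈ Finset.univ.erase v₀, ξ u ≠ 0 := by
        by_contra hc
        push_neg at hc
        rw [Finset.sum_eq_zero hc] at hpos
        omega
      have huv : u ≠ v₀ := (Finset.mem_erase.1 humem).1
      obtain ⟨w⟩ := hG.preconnected u v₀
      obtain ⟨s, hs⟩ := reach_moveOne w ξ hξ (Nat.one_le_iff_ne_zero.2 hu)
      set ξ₂ := moveOne ξ u v₀ with hξ₂def
      have hξ₂ : ξ₂ ∈ S := moveOne_mem hξ v₀ (Nat.one_le_iff_ne_zero.2 hu)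
      have hξ₂v : ξ₂ v₀ = ξ v₀ + 1 := by
        simp [hξ₂def, moveOne, huv.symm, Ne.symm huv]
      obtain ⟨t, ht⟩ := ih ξ₂ hξ₂ (by omega)
      exact ⟨s + t, pOneIter_pos_trans s t hξ₂ (allAt_mem v₀) hs ht⟩

lemma allAt_selfloop (hG : G.Connected) (h2 : 1 < Fintype.card V) (v₀ : V) :
    0 < pOne G (allAt M v₀) (allAt M v₀) := by
  have : Nontrivial V := Fintype.one_lt_card_iff_nontrivial.1 h2
  obtain ⟨u, hu⟩ := exists_ne v₀
  obtain ⟨w⟩ := hG.preconnected v₀ u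
  have hadj : ∃ b, G.Adj b v₀ := by
    cases w with
    | nil => exact absurd rfl (Ne.symm hu)
    | cons h p => exact ⟨_, h.symm⟩
  obtain ⟨b, hb⟩ := hadj
  have hbv : b ≠ v₀ := G.ne_of_adj hb
  have hmv : moveDollar (allAt M v₀) b v₀ = allAt M v₀ := by
    funext z; simp [moveDollar, allAt, hbv]
  have := pOne_pos_of_move (ξ := allAt M v₀) hb
  rwa [hmv] at this

lemma allAt_selfloop_iter (hG : G.Connected) (h2 : 1 < Fintype.card V) (v₀ : V) (k : ℕ) :
    0 < pOneIter G M k (allAt M v₀) (allAt M v₀) := by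
  induction k with
  | zero => rw [pOneIter_zero, if_pos rfl]; norm_num
  | succ k ih =>
    refine pOneIter_pos_trans k 1 (allAt_mem v₀) (allAt_mem v₀) ih ?_
    rw [pOneIter_one (allAt_mem v₀)]
    exact allAt_selfloop hG h2 v₀

lemma exists_t0 (hG : G.Connected) (h2 : 1 < Fintype.card V) :
    ∃ t₀ : ℕ, 0 < t₀ ∧ ∀ ξ ∈ S, ∀ ξ' ∈ S, 0 < pOneIter G M t₀ ξ ξ' := by
  classical
  have : Nontrivial V := Fintype.one_lt_card_iff_nontrivial.1 h2
  obtain ⟨v₀⟩ : Nonempty V := inferInstance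
  set f : (V → ℕ) → ℕ := fun ξ =>
    if h : ∃ t, 0 < pOneIter G M t ξ (allAt M v₀) then h.choose else 0 with hfdef
  set T := (S).sup f with hTdef
  have hfT : ∀ ξ ∈ S, 0 < pOneIter G M T ξ (allAt M v₀) := by
    intro ξ hξ
    have h : ∃ t, 0 < pOneIter G M t ξ (allAt M v₀) := reach_allAt hG v₀ ξ hξ
    have hfξ : 0 < pOneIter G M (f ξ) ξ (allAt M v₀) := by
      rw [hfdef]; simp only [dif_pos h]; exact h.choose_spec
    have hle : f ξ ≤ T := Finset.le_sup hξ
    have : T = f ξ + (T - f ξ) := by omega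
    rw [this]
    exact pOneIter_pos_trans _ _ (allAt_mem v₀) (allAt_mem v₀) hfξ
      (allAt_selfloop_iter hG h2 v₀ _)
  refine ⟨T + 1 + T, by omega, fun ξ hξ ξ' hξ' => ?_⟩
  refine pOneIter_pos_trans (T + 1) T (allAt_mem v₀) hξ' ?_ ?_
  · refine pOneIter_pos_trans T 1 (allAt_mem v₀) (allAt_mem v₀) (hfT ξ hξ) ?_
    rw [pOneIter_one (allAt_mem v₀)]
    exact allAt_selfloop hG h2 v₀
  · rw [pOneIter_symm T (allAt_mem v₀) hξ']
    exact hfT ξ' hξ'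

end Reach

section Card
variable {V : Type*} [Fintype V] [DecidableEq V] {M : ℕ}

lemma sum_count_univ (m : Multiset V) : ∑ x, m.count x = Multiset.card m := by
  rw [← Multiset.toFinset_sum_count_eq]
  refine (Finset.sum_subset (Finset.subset_univ _) fun x _ hx => ?_).symm
  exact Multiset.count_eq_zero.2 (by simpa using hx)

lemma count_toM (ξ : V → ℕ) (y : V) :
    (∑ x, Multiset.replicate (ξ x) x).count y = ξ y := by
  rw [← Multiset.coe_countAddMonoidHom, map_sum]
  rw [Multiset.coe_countAddMonoidHom]
  rw [Finset.sum_congr rfl fun x _ => Multiset.count_replicate y x (ξ x)]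
  rw [Finset.sum_ite_eq' Finset.univ y ξ, if_pos (Finset.mem_univ y)]

lemma card_stateSpace : (stateSpace V M).card = (Fintype.card V + M - 1).choose M := by
  rw [← Sym.card_sym_eq_choose (α := V) M, ← Finset.card_univ]
  refine Finset.card_bij (fun ξ hξ => ⟨∑ x, Multiset.replicate (ξ x) x, ?_⟩) ?_ ?_ ?_
  · rw [← sum_count_univ]
    rw [Finset.sum_congr rfl fun y _ => count_toM ξ y]
    exact mem_stateSpace.1 hξ
  · intro ξ hξ; exact Finset.mem_univ _
  · intro ξ hξ ξ' hξ' h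
    funext y
    rw [← count_toM ξ y, ← count_toM ξ' y]
    have h : ∑ x, Multiset.replicate (ξ x) x = ∑ x, Multiset.replicate (ξ' x) x :=
      congrArg Subtype.val h
    rw [h]
  · rintro ⟨m, hm⟩ -
    refine ⟨fun x => m.count x, mem_stateSpace.2 (by rw [sum_count_univ, hm]), ?_⟩
    ext1
    dsimp
    ext y
    rw [count_toM]

end Card

section Converge
variable {V : Type*} [Fintype V] [DecidableEq V] {G : SimpleGraph V} [DecidableRel G.Adj]
  {M : ℕ}

local notation "S" => stateSpace V M

lemma converges (hG : G.Connected) (h2 : 1 < Fintype.card V) :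
    ∀ ξ₀ ∈ S, ∀ ξ' ∈ S, Filter.Tendsto (fun t => pOneIter G M t ξ₀ ξ') Filter.atTop
      (nhds (1 / ((S).card : ℝ))) := by
  classical
  intro ξ₀ hξ₀ ξ' hξ'
  have : Nontrivial V := Fintype.one_lt_card_iff_nontrivial.1 h2
  have hE : 0 < (oEdges G).card := edges_card_pos hG h2
  obtain ⟨t₀, ht₀pos, ht₀⟩ := exists_t0 (M := M) hG h2
  have hSne : (S).Nonempty := ⟨allAt M (Classical.arbitrary V), allAt_mem _⟩
  set n : ℝ := ((S).card : ℝ) with hn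
  have hnpos : 0 < n := by rw [hn]; exact_mod_cast Finset.card_pos.2 hSne
  set Mx : ℕ → ℝ := fun t => (S).sup' hSne fun ξ => pOneIter G M t ξ ξ' with hMx
  set mn : ℕ → ℝ := fun t => (S).inf' hSne fun ξ => pOneIter G M t ξ ξ' with hmn
  have sup_le_iff : ∀ (t : ℕ) (a : ℝ), Mx t ≤ a ↔ ∀ ξ ∈ S, pOneIter G M t ξ ξ' ≤ a := by
    intro t a; rw [hMx]; exact Finset.sup'_le_iff hSne _
  have le_inf_iff : ∀ (t : ℕ) (a : ℝ), a ≤ mn t ↔ ∀ ξ ∈ S, a ≤ pOneIter G M t ξ ξ' := by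
    intro t a; rw [hmn]; exact Finset.le_inf'_iff hSne _
  have hle : ∀ t, ∀ ξ ∈ S, pOneIter G M t ξ ξ' ≤ Mx t :=
    fun t => (sup_le_iff t (Mx t)).1 le_rfl
  have hge : ∀ t, ∀ ξ ∈ S, mn t ≤ pOneIter G M t ξ ξ' :=
    fun t => (le_inf_iff t (mn t)).1 le_rfl
  -- monotonicity
  have hMxmono : ∀ t, Mx (t + 1) ≤ Mx t := by
    intro t
    refine (sup_le_iff _ _).2 fun ξ hξ => ?_
    rw [pOneIter_succ_left hξ t hξ']
    calc ∑ η ∈ S, pOne G ξ η * pOneIter G M t η ξ'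
        ≤ ∑ η ∈ S, pOne G ξ η * Mx t := by
          refine Finset.sum_le_sum fun η hη => ?_
          exact mul_le_mul_of_nonneg_left (hle t η hη) (pOne_nonneg ξ η)
      _ = Mx t := by rw [← Finset.sum_mul, pOne_row_sum hE hξ, one_mul]
  have hmnmono : ∀ t, mn t ≤ mn (t + 1) := by
    intro t
    refine (le_inf_iff _ _).2 fun ξ hξ => ?_
    rw [pOneIter_succ_left hξ t hξ']
    calc mn t = ∑ η ∈ S, pOne G ξ η * mn t := by
          rw [← Finset.sum_mul, pOne_row_sum hE hξ, one_mul]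
      _ ≤ ∑ η ∈ S, pOne G ξ η * pOneIter G M t η ξ' := by
          refine Finset.sum_le_sum fun η hη => ?_
          exact mul_le_mul_of_nonneg_left (hge t η hη) (pOne_nonneg ξ η)
  -- delta
  have hSSne : ((S) ×ˢ (S)).Nonempty := hSne.product hSne
  set δ : ℝ := ((S) ×ˢ (S)).inf' hSSne (fun p => pOneIter G M t₀ p.1 p.2) with hδ
  have hδpos : 0 < δ := by
    obtain ⟨p, hp, hpe⟩ := Finset.exists_mem_eq_inf' hSSne (fun p => pOneIter G M t₀ p.1 p.2)
    rw [hδ, hpe]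
    rw [Finset.mem_product] at hp
    exact ht₀ p.1 hp.1 p.2 hp.2
  have hδle : ∀ ξ ∈ S, ∀ η ∈ S, δ ≤ pOneIter G M t₀ ξ η := by
    intro ξ hξ η hη
    rw [hδ]
    exact Finset.inf'_le (fun p => pOneIter G M t₀ p.1 p.2)
      (Finset.mem_product.2 (⟨hξ, hη⟩ : (ξ, η).1 ∈ S ∧ (ξ, η).2 ∈ S))
  have hδn : n * δ ≤ 1 := by
    obtain ⟨ξs, hξs⟩ := hSne
    calc n * δ = ∑ _η ∈ S, δ := by rw [Finset.sum_const, nsmul_eq_mul]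
      _ ≤ ∑ η ∈ S, pOneIter G M t₀ ξs η := Finset.sum_le_sum fun η hη => hδle ξs hξs η hη
      _ = 1 := pOneIter_row_sum hE t₀ hξs
  set r : ℝ := 1 - n * δ with hr
  have hr0 : 0 ≤ r := by rw [hr]; linarith
  have hr1 : r < 1 := by
    rw [hr]
    have : 0 < n * δ := mul_pos hnpos hδpos
    linarith
  -- contraction
  have key : ∀ t, Mx (t₀ + t) - mn (t₀ + t) ≤ r * (Mx t - mn t) := by
    intro t
    set Sig : ℝ := ∑ η ∈ S, pOneIter G M t η ξ' with hSig
    have expand : ∀ ξ ∈ S, pOneIter G M (t₀ + t) ξ ξ' =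
        δ * Sig + ∑ η ∈ S, (pOneIter G M t₀ ξ η - δ) * pOneIter G M t η ξ' := by
      intro ξ hξ
      rw [pOneIter_chapman t₀ ξ t ξ' hξ', hSig, Finset.mul_sum, ← Finset.sum_add_distrib]
      exact Finset.sum_congr rfl fun η _ => by ring
    have coeff : ∀ ξ ∈ S, ∑ η ∈ S, (pOneIter G M t₀ ξ η - δ) = r := by
      intro ξ hξ
      rw [Finset.sum_sub_distrib, pOneIter_row_sum hE t₀ hξ, Finset.sum_const, nsmul_eq_mul, hr]
    have hup : Mx (t₀ + t) ≤ δ * Sig + r * Mx t := by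
      refine (sup_le_iff _ _).2 fun ξ hξ => ?_
      rw [expand ξ hξ]
      have : ∑ η ∈ S, (pOneIter G M t₀ ξ η - δ) * pOneIter G M t η ξ'
          ≤ ∑ η ∈ S, (pOneIter G M t₀ ξ η - δ) * Mx t := by
        refine Finset.sum_le_sum fun η hη => ?_
        exact mul_le_mul_of_nonneg_left (hle t η hη) (sub_nonneg.2 (hδle ξ hξ η hη))
      rw [← Finset.sum_mul, coeff ξ hξ] at this
      linarith
    have hdown : δ * Sig + r * mn t ≤ mn (t₀ + t) := by
      refine (le_inf_iff _ _).2 fun ξ hξ => ?_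
      rw [expand ξ hξ]
      have : ∑ η ∈ S, (pOneIter G M t₀ ξ η - δ) * mn t
          ≤ ∑ η ∈ S, (pOneIter G M t₀ ξ η - δ) * pOneIter G M t η ξ' := by
        refine Finset.sum_le_sum fun η hη => ?_
        exact mul_le_mul_of_nonneg_left (hge t η hη) (sub_nonneg.2 (hδle ξ hξ η hη))
      rw [← Finset.sum_mul, coeff ξ hξ] at this
      linarith
    have := sub_le_sub hup hdown
    calc Mx (t₀ + t) - mn (t₀ + t) ≤ (δ * Sig + r * Mx t) - (δ * Sig + r * mn t) := this
      _ = r * (Mx t - mn t) := by ring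
  set d : ℕ → ℝ := fun t => Mx t - mn t with hd
  have hd0 : d 0 ≤ 1 := by
    have h1 : Mx 0 ≤ 1 := by
      refine (sup_le_iff _ _).2 fun ξ hξ => ?_
      rw [pOneIter_zero]
      split <;> norm_num
    have h2' : 0 ≤ mn 0 := (le_inf_iff _ _).2 fun ξ hξ => pOneIter_nonneg 0 ξ ξ'
    rw [hd]; dsimp; linarith
  have hdnn : ∀ t, 0 ≤ d t := by
    intro t
    obtain ⟨ξs, hξs⟩ := hSne
    have := le_trans (hge t ξs hξs) (hle t ξs hξs)
    rw [hd]; dsimp; linarith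
  have hdanti : Antitone d := by
    refine antitone_nat_of_succ_le fun t => ?_
    have := hMxmono t
    have := hmnmono t
    rw [hd]; dsimp; linarith
  have hiter : ∀ k, d (k * t₀) ≤ r ^ k := by
    intro k
    induction k with
    | zero => simpa using hd0
    | succ k ih =>
      have h1 : d ((k + 1) * t₀) ≤ r * d (k * t₀) := by
        have := key (k * t₀)
        have heq : t₀ + k * t₀ = (k + 1) * t₀ := by ring
        rw [heq] at this
        exact this
      calc d ((k + 1) * t₀) ≤ r * d (k * t₀) := h1
        _ ≤ r * r ^ k := mul_le_mul_of_nonneg_left ih hr0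
        _ = r ^ (k + 1) := by ring
  have hdbound : ∀ t, d t ≤ r ^ (t / t₀) := by
    intro t
    have h1 : (t / t₀) * t₀ ≤ t := Nat.div_mul_le_self t t₀
    exact le_trans (hdanti h1) (hiter (t / t₀))
  -- 1/n is between mn and Mx
  have hmid : ∀ t, mn t ≤ 1 / n ∧ 1 / n ≤ Mx t := by
    intro t
    have hcol : ∑ ξ ∈ S, pOneIter G M t ξ ξ' = 1 := pOneIter_col_sum hE t hξ'
    have hlo : n * mn t ≤ 1 := by
      calc n * mn t = ∑ _ξ ∈ S, mn t := by rw [Finset.sum_const, nsmul_eq_mul]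
        _ ≤ ∑ ξ ∈ S, pOneIter G M t ξ ξ' := Finset.sum_le_sum fun ξ hξ => hge t ξ hξ
        _ = 1 := hcol
    have hhi : 1 ≤ n * Mx t := by
      calc (1:ℝ) = ∑ ξ ∈ S, pOneIter G M t ξ ξ' := hcol.symm
        _ ≤ ∑ _ξ ∈ S, Mx t := Finset.sum_le_sum fun ξ hξ => hle t ξ hξ
        _ = n * Mx t := by rw [Finset.sum_const, nsmul_eq_mul]
    constructor
    · rw [le_div_iff₀ hnpos]; linarith
    · rw [div_le_iff₀ hnpos]; linarith
  -- squeeze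
  have habs : ∀ t, |pOneIter G M t ξ₀ ξ' - 1 / n| ≤ r ^ (t / t₀) := by
    intro t
    refine le_trans (abs_le.2 ⟨?_, ?_⟩) (hdbound t)
    · have := hge t ξ₀ hξ₀
      have := (hmid t).2
      rw [hd]; dsimp; linarith
    · have := hle t ξ₀ hξ₀
      have := (hmid t).1
      rw [hd]; dsimp; linarith
  have hdiv : Filter.Tendsto (fun t : ℕ => t / t₀) Filter.atTop Filter.atTop := by
    refine Filter.tendsto_atTop_atTop.2 fun b => ⟨b * t₀, fun a ha => ?_⟩
    exact (Nat.le_div_iff_mul_le ht₀pos).2 ha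
  have hpow : Filter.Tendsto (fun t : ℕ => r ^ (t / t₀)) Filter.atTop (nhds 0) :=
    (tendsto_pow_atTop_nhds_zero_of_lt_one hr0 hr1).comp hdiv
  have : Filter.Tendsto (fun t => pOneIter G M t ξ₀ ξ' - 1 / n) Filter.atTop (nhds 0) := by
    refine squeeze_zero_norm (fun t => ?_) hpow
    exact habs t
  have := this.add tendsto_const_nhds (b := 1 / n)
  simpa using this

end Converge

section Main
variable {V : Type*} [Fintype V] [DecidableEq V] {G : SimpleGraph V} [DecidableRel G.Adj]
  {M : ℕ}

local notation "S" => stateSpace V M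

lemma stationary_iter (hE : 0 < (oEdges G).card) {μ : (V → ℕ) → ℝ}
    (hstat : ∀ ξ' ∈ S, ∑ ξ ∈ S, μ ξ * pOne G ξ ξ' = μ ξ') :
    ∀ t : ℕ, ∀ ξ' ∈ S, ∑ ξ ∈ S, μ ξ * pOneIter G M t ξ ξ' = μ ξ' := by
  intro t
  induction t with
  | zero =>
    intro ξ' hξ'
    rw [Finset.sum_congr rfl fun ξ _ => by rw [pOneIter_zero, mul_ite, mul_one, mul_zero],
      Finset.sum_ite_eq' S ξ' μ, if_pos hξ']
  | succ t ih =>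
    intro ξ' hξ'
    rw [Finset.sum_congr rfl fun ξ _ => by rw [pOneIter_succ, Finset.mul_sum], Finset.sum_comm]
    rw [Finset.sum_congr rfl fun η hη => by
      rw [show (∑ ξ ∈ S, μ ξ * (pOneIter G M t ξ η * pOne G η ξ')) =
          (∑ ξ ∈ S, μ ξ * pOneIter G M t ξ η) * pOne G η ξ' by
        rw [Finset.sum_mul]; exact Finset.sum_congr rfl fun ξ _ => by ring, ih η hη]]
    exact hstat ξ' hξ'

end Main

/-- For Model 1 on a connected graph with `N ≥ 2` and `M ≥ 1`: the unique stationary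
distribution is uniform on `𝒜_{N,M}` (of cardinality `C(M+N−1, N−1)`), and from any
initial configuration the distribution at time `t` converges to it. -/
theorem model_one_stationary_uniform_and_convergence {V : Type*} [Fintype V]
    [DecidableEq V] (G : SimpleGraph V) [DecidableRel G.Adj] (hG : G.Connected)
    (N M : ℕ) (hV : Fintype.card V = N) (hN : 2 ≤ N) (hM : 1 ≤ M) :
    (∀ μ : (V → ℕ) → ℝ, (∀ ξ ∈ stateSpace V M, 0 ≤ μ ξ) →
      (∑ ξ ∈ stateSpace V M, μ ξ = 1) →
      (∀ ξ' ∈ stateSpace V M, ∑ ξ ∈ stateSpace V M, μ ξ * pOne G ξ ξ' = μ ξ') →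
      ∀ ξ ∈ stateSpace V M, μ ξ = 1 / ((M + N - 1).choose (N - 1) : ℝ)) ∧
    (∀ ξ₀ ∈ stateSpace V M, ∀ ξ ∈ stateSpace V M,
      Tendsto (fun t => pOneIter G M t ξ₀ ξ) atTop
        (nhds (1 / ((M + N - 1).choose (N - 1) : ℝ)))) := by
  have h2 : 1 < Fintype.card V := by omega
  have hE : 0 < (oEdges G).card := edges_card_pos hG h2
  have hcard : (stateSpace V M).card = (M + N - 1).choose (N - 1) := by
    rw [card_stateSpace, hV]
    have h1 : N - 1 ≤ M + N - 1 := by omega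
    have h2' : (M + N - 1) - (N - 1) = M := by omega
    have h3 := Nat.choose_symm h1
    rw [h2'] at h3
    rw [show N + M - 1 = M + N - 1 by omega, h3]
  have hconv : ∀ ξ₀ ∈ stateSpace V M, ∀ ξ ∈ stateSpace V M,
      Filter.Tendsto (fun t => pOneIter G M t ξ₀ ξ) Filter.atTop
        (nhds (1 / ((M + N - 1).choose (N - 1) : ℝ))) := by
    intro ξ₀ hξ₀ ξ hξ
    have := converges hG h2 ξ₀ hξ₀ ξ hξ
    rwa [hcard] at this
  refine ⟨?_, hconv⟩
  intro μ hnn hsum hstat ξ' hξ'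
  have hiter := stationary_iter hE hstat
  have hconst : (fun t => ∑ ξ ∈ stateSpace V M, μ ξ * pOneIter G M t ξ ξ')
      = fun _ => μ ξ' := funext fun t => hiter t ξ' hξ'
  have hlim : Filter.Tendsto (fun t => ∑ ξ ∈ stateSpace V M, μ ξ * pOneIter G M t ξ ξ')
      Filter.atTop (nhds (∑ ξ ∈ stateSpace V M, μ ξ * (1 / ((M + N - 1).choose (N - 1) : ℝ)))) := by
    refine tendsto_finset_sum _ fun ξ hξ => ?_
    exact (hconv ξ hξ ξ' hξ').const_mul (μ ξ)
  rw [hconst] at hlim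
  have := tendsto_nhds_unique tendsto_const_nhds hlim
  rw [this, ← Finset.sum_mul, hsum, one_mul]
end
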